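/- There exists a constant c ∈ ℕ such that for every 1-VASS V = (Q,T) with unary updates (i.e., T ⊆ Q×{−1,0,1}×Q) and all states p,q ∈ Q and all u,v ∈ ℕ: if p(u) →*_ℕ q(v), then, setting D = |v − u|, there exists a word π ∈ T* with p(u) →^π_ℕ q(v) and |π| ≤ (|Q| + 1)^c + |Q|·D. -/

import Mathlib

namespace VASS

/-- A transition of a 1-VASS: source state, integer update, target state. -/
abbrev Trans1 := ℕ × ℤ × ℕ

/-- The norm of a transition set of a 1-VASS. -/
def tnorm1 (T : Finset Trans1) : ℕ := T.sup fun t => t.2.1.natAbs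

/-- The displacement of a word of transitions. -/
def disp1 (π : List Trans1) : ℤ := (π.map fun t => t.2.1).sum

/-- `IsPathFrom1 p q π` : `π` is a path from `p` to `q`. -/
def IsPathFrom1 : ℕ → ℕ → List Trans1 → Prop
  | p, q, [] => p = q
  | p, q, t :: rest => t.1 = p ∧ IsPathFrom1 t.2.2 q rest

/-- ℕ as a subset of ℤ. -/
def NNeg : Set ℤ := {z | 0 ≤ z}

/-- `p(u) →^π_A q(v)` for a 1-VASS. -/
def Run1 (T : Finset Trans1) (A : Set ℤ) (p : ℕ) (u : ℤ) (q : ℕ) (v : ℤ)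
    (π : List Trans1) : Prop :=
  (∀ t ∈ π, t ∈ T) ∧ IsPathFrom1 p q π ∧ u ∈ A ∧ v = u + disp1 π ∧
    ∀ i, 1 ≤ i → i ≤ π.length → u + disp1 (π.take i) ∈ A

/-- `p(u) →*_A q(v)` for a 1-VASS. -/
def Reach1 (T : Finset Trans1) (A : Set ℤ) (p : ℕ) (u : ℤ) (q : ℕ) (v : ℤ) : Prop :=
  ∃ π, Run1 T A p u q v π

/-- A linear path scheme of a 1-VASS, presented as the initial segment `α₀`
together with the list of pairs `(βᵢ, αᵢ)`. -/
abbrev LPS1 := List Trans1 × List (List Trans1 × List Trans1)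

/-- The underlying word `α₀ β₁ α₁ ⋯ β_k α_k` of a linear path scheme. -/
def lpsSupport1 (ρ : LPS1) : List Trans1 :=
  ρ.1 ++ (ρ.2.map fun s => s.1 ++ s.2).flatten

/-- The length of a linear path scheme. -/
def lpsLen1 (ρ : LPS1) : ℕ := (lpsSupport1 ρ).length

/-- The number of cycles of a linear path scheme. -/
def numCycles1 (ρ : LPS1) : ℕ := ρ.2.length

/-- `ρ` is a linear path scheme from `p` to `q` over the transition set `T`. -/
def IsLPSFrom1 (T : Finset Trans1) (p q : ℕ) (ρ : LPS1) : Prop :=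
  (∀ t ∈ lpsSupport1 ρ, t ∈ T) ∧ IsPathFrom1 p q (lpsSupport1 ρ) ∧
    ∀ s ∈ ρ.2, s.1 ≠ [] ∧ ∃ r, IsPathFrom1 r r s.1

/-- The word `α₀ β₁^{e₁} α₁ ⋯ β_k^{e_k} α_k` of a linear path scheme. -/
def lpsWord1 (ρ : LPS1) (e : List ℕ) : List Trans1 :=
  ρ.1 ++ (List.zipWith (fun s n => (List.replicate n s.1).flatten ++ s.2) ρ.2 e).flatten

/-- Membership in the language of a linear path scheme. -/
def InLang1 (ρ : LPS1) (π : List Trans1) : Prop :=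
  ∃ e : List ℕ, e.length = numCycles1 ρ ∧ π = lpsWord1 ρ e

/-- `p(u) →^Y_A q(v)` for a finite set `Y` of linear path schemes. -/
def SReach1 (T : Finset Trans1) (Y : Finset LPS1) (A : Set ℤ)
    (p : ℕ) (u : ℤ) (q : ℕ) (v : ℤ) : Prop :=
  ∃ ρ ∈ Y, ∃ π, InLang1 ρ π ∧ Run1 T A p u q v π

lemma disp1_append (xs ys : List Trans1) : disp1 (xs ++ ys) = disp1 xs + disp1 ys := by
  simp [disp1]

def endSt (p : ℕ) : List Trans1 → ℕ
  | [] => p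
  | t :: l => endSt t.2.2 l

lemma endSt_append (p : ℕ) (xs ys : List Trans1) :
    endSt p (xs ++ ys) = endSt (endSt p xs) ys := by
  induction xs generalizing p with
  | nil => simp [endSt]
  | cons t l ih => simp [endSt, ih]

lemma endSt_mem {Q : Finset ℕ} {p : ℕ} {l : List Trans1}
    (hl : ∀ x ∈ l, x.2.2 ∈ Q) (hp : p ∈ Q) : endSt p l ∈ Q := by
  induction l generalizing p with
  | nil => exact hp
  | cons t l ih => exact ih (fun x hx => hl x (List.mem_cons_of_mem _ hx)) (hl t List.mem_cons_self)

lemma isPath_append (p q : ℕ) (xs ys : List Trans1) :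
    IsPathFrom1 p q (xs ++ ys) ↔
      IsPathFrom1 p (endSt p xs) xs ∧ IsPathFrom1 (endSt p xs) q ys := by
  induction xs generalizing p with
  | nil => simp [IsPathFrom1, endSt]
  | cons t l ih =>
    show t.1 = p ∧ IsPathFrom1 t.2.2 q (l ++ ys) ↔ _
    rw [ih]
    simp only [IsPathFrom1, endSt]
    tauto

lemma ivt_up (f : ℕ → ℤ) (hf : ∀ t, f (t + 1) ≤ f t + 1)
    {a b : ℕ} (hab : a ≤ b) {y : ℤ} (h1 : f a ≤ y) (h2 : y ≤ f b) :
    ∃ t, a ≤ t ∧ t ≤ b ∧ f t = y := by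
  induction b with
  | zero =>
    have : a = 0 := Nat.le_zero.mp hab
    subst this
    exact ⟨0, le_refl _, le_refl _, le_antisymm h1 h2⟩
  | succ b ih =>
    rcases Nat.eq_or_lt_of_le hab with h | h
    · exact ⟨b + 1, h.le, le_refl _, by subst h; exact le_antisymm h1 h2⟩
    · have hab' : a ≤ b := Nat.lt_succ_iff.mp h
      by_cases hy : y ≤ f b
      · obtain ⟨t, h1', h2', h3'⟩ := ih hab' hy
        exact ⟨t, h1', h2'.trans (Nat.le_succ b), h3'⟩
      · push_neg at hy
        refine ⟨b + 1, hab, le_refl _, ?_⟩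
        have := hf b
        omega

lemma ivt_down (f : ℕ → ℤ) (hf : ∀ t, f t - 1 ≤ f (t + 1))
    {a b : ℕ} (hab : a ≤ b) {y : ℤ} (h1 : f b ≤ y) (h2 : y ≤ f a) :
    ∃ t, a ≤ t ∧ t ≤ b ∧ f t = y := by
  obtain ⟨t, ht1, ht2, ht3⟩ := ivt_up (fun t => -f t) (fun t => by have := hf t; omega)
    hab (y := -y) (by omega) (by omega)
  exact ⟨t, ht1, ht2, by omega⟩


lemma doubleCut {T : Finset Trans1} {p q : ℕ} {u v : ℤ} {r0 r1 : ℕ}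
    {σ τ₁ μ τ₂ ω : List Trans1}
    (h : Run1 T NNeg p u q v (σ ++ (τ₁ ++ (μ ++ (τ₂ ++ ω)))))
    (h0 : endSt p σ = r0) (h1 : endSt r0 τ₁ = r0) (h2 : endSt r0 μ = r1)
    (h3 : endSt r1 τ₂ = r1)
    (hd : disp1 τ₁ + disp1 τ₂ = 0)
    (hmid : ∀ i ≤ μ.length, 0 ≤ u + disp1 σ + disp1 (μ.take i)) :
    Run1 T NNeg p u q v (σ ++ (μ ++ ω)) := by
  obtain ⟨hT, hpath, hu, hv, hval⟩ := h
  simp only [NNeg, Set.mem_setOf_eq] at hval ⊢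
  refine ⟨?_, ?_, hu, ?_, ?_⟩
  · intro t ht
    apply hT
    simp only [List.mem_append] at ht ⊢
    tauto
  · rw [isPath_append] at hpath ⊢
    rw [h0] at hpath ⊢
    obtain ⟨hσ, hrest⟩ := hpath
    rw [isPath_append, h1] at hrest
    obtain ⟨_, hrest⟩ := hrest
    rw [isPath_append, h2] at hrest ⊢
    obtain ⟨hμ, hrest⟩ := hrest
    rw [isPath_append, h3] at hrest
    exact ⟨hσ, hμ, hrest.2⟩
  · simp only [disp1_append] at hv ⊢
    omega
  · intro i hi1 hi2
    simp only [NNeg, Set.mem_setOf_eq]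
    simp only [List.length_append] at hi2
    rcases le_or_gt i σ.length with hcase | hcase
    · have e1 : (σ ++ (μ ++ ω)).take i = σ.take i := List.take_append_of_le_length hcase
      have e2 : (σ ++ (τ₁ ++ (μ ++ (τ₂ ++ ω)))).take i = σ.take i :=
        List.take_append_of_le_length hcase
      rw [e1, ← e2]
      exact hval i hi1 (by simp only [List.length_append]; omega)
    · rcases le_or_gt i (σ.length + μ.length) with hcase2 | hcase2
      · obtain ⟨j, rfl⟩ : ∃ j, i = σ.length + j := ⟨i - σ.length, by omega⟩
        rw [List.take_length_add_append, List.take_append_of_le_length (by omega), disp1_append]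
        have := hmid j (by omega)
        omega
      · obtain ⟨j, rfl⟩ : ∃ j, i = σ.length + (μ.length + j) := ⟨i - σ.length - μ.length, by omega⟩
        rw [List.take_length_add_append, List.take_length_add_append]
        have hlast := hval (σ.length + (τ₁.length + (μ.length + (τ₂.length + j)))) (by omega)
          (by simp only [List.length_append]; omega)
        rw [List.take_length_add_append, List.take_length_add_append, List.take_length_add_append, List.take_length_add_append] at hlast
        simp only [disp1_append] at hlast ⊢
        omega

/-- value of the counter after `t` steps -/
def valAt (u : ℤ) (π : List Trans1) (t : ℕ) : ℤ := u + disp1 (π.take t)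

/-- state after `t` steps -/
def stAt (p : ℕ) (π : List Trans1) (t : ℕ) : ℕ := endSt p (π.take t)

lemma take_eq_of_le {l : List Trans1} {a b : ℕ} (h : a ≤ b) :
    l.take b = l.take a ++ (l.drop a).take (b - a) := by
  have := @List.take_add _ l a (b - a)
  rwa [show a + (b - a) = b by omega] at this

lemma key' {T : Finset Trans1} {p q : ℕ} {u v : ℤ} {π : List Trans1}
    (hrun : Run1 T NNeg p u q v π) {i1 i2 j2 j1 : ℕ}
    (h12 : i1 ≤ i2) (h23 : i2 ≤ j2) (h34 : j2 ≤ j1) (h4L : j1 ≤ π.length)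
    (hst1 : stAt p π i1 = stAt p π i2) (hst2 : stAt p π j2 = stAt p π j1)
    (hdisp : (valAt u π i2 - valAt u π i1) + (valAt u π j1 - valAt u π j2) = 0)
    (hmid : ∀ t, i2 ≤ t → t ≤ j2 → valAt u π i2 - valAt u π i1 ≤ valAt u π t) :
    ∃ π', Run1 T NNeg p u q v π' ∧
      π'.length + (i2 - i1) + (j1 - j2) = π.length := by
  set σ := π.take i1 with hσ
  set τ₁ := (π.drop i1).take (i2 - i1) with hτ₁
  set μ := (π.drop i2).take (j2 - i2) with hμ
  set τ₂ := (π.drop j2).take (j1 - j2) with hτ₂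
  set ω := π.drop j1 with hω
  have e2 : π.take i2 = σ ++ τ₁ := take_eq_of_le h12
  have e3 : π.take j2 = π.take i2 ++ μ := take_eq_of_le h23
  have e4 : π.take j1 = π.take j2 ++ τ₂ := take_eq_of_le h34
  have e5 : π = π.take j1 ++ ω := (List.take_append_drop j1 π).symm
  have hdecomp : π = σ ++ (τ₁ ++ (μ ++ (τ₂ ++ ω))) := by
    conv_lhs => rw [e5, e4, e3, e2]
    simp [List.append_assoc]
  have hlen_le : ∀ a b : ℕ, a ≤ b → b ≤ π.length → ((π.drop a).take (b - a)).length = b - a := by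
    intro a b hab hbL
    rw [List.length_take, List.length_drop]
    omega
  have dσ : disp1 σ = valAt u π i1 - u := by simp [valAt, hσ]
  have d2 : disp1 τ₁ = valAt u π i2 - valAt u π i1 := by
    have := congrArg disp1 e2
    rw [disp1_append] at this
    simp only [valAt] at *
    omega
  have d3 : disp1 μ = valAt u π j2 - valAt u π i2 := by
    have := congrArg disp1 e3
    rw [disp1_append] at this
    simp only [valAt] at *
    omega
  have d4 : disp1 τ₂ = valAt u π j1 - valAt u π j2 := by
    have := congrArg disp1 e4
    rw [disp1_append] at this
    simp only [valAt] at *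
    omega
  have s2 : endSt (stAt p π i1) τ₁ = stAt p π i1 := by
    have h' : stAt p π i2 = endSt (stAt p π i1) τ₁ := by
      show endSt p (π.take i2) = _
      rw [e2, endSt_append]
      rfl
    rw [← h']
    exact hst1.symm
  have s3 : endSt (stAt p π i1) μ = stAt p π j2 := by
    have h' : stAt p π j2 = endSt (stAt p π i2) μ := by
      show endSt p (π.take j2) = _
      rw [e3, endSt_append]
      rfl
    rw [hst1, h']
  have s4 : endSt (stAt p π j2) τ₂ = stAt p π j2 := by
    have h' : stAt p π j1 = endSt (stAt p π j2) τ₂ := by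
      show endSt p (π.take j1) = _
      rw [e4, endSt_append]
      rfl
    rw [← h']
    exact hst2.symm
  have hrun' : Run1 T NNeg p u q v (σ ++ (τ₁ ++ (μ ++ (τ₂ ++ ω)))) := hdecomp ▸ hrun
  have hres := doubleCut hrun' rfl s2 s3 s4 (by omega)
    (by
      intro i hi
      have hμlen : μ.length = j2 - i2 := hlen_le i2 j2 h23 (h34.trans h4L)
      have hμtake : μ.take i = (π.drop i2).take i := by
        rw [hμ, List.take_take]
        congr 1
        omega
      have etake : π.take (i2 + i) = π.take i2 ++ (π.drop i2).take i := @List.take_add _ π i2 i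
      have dtake : disp1 ((π.drop i2).take i) = valAt u π (i2 + i) - valAt u π i2 := by
        have := congrArg disp1 etake
        rw [disp1_append] at this
        simp only [valAt] at *
        omega
      have := hmid (i2 + i) (by omega) (by omega)
      rw [hμtake, dtake, dσ]
      omega)
  refine ⟨σ ++ (μ ++ ω), hres, ?_⟩
  have l1 : σ.length = i1 := by rw [hσ, List.length_take]; omega
  have l3 : μ.length = j2 - i2 := hlen_le i2 j2 h23 (h34.trans h4L)
  have l5 : ω.length = π.length - j1 := by rw [hω, List.length_drop]
  simp only [List.length_append]
  omega




lemma valAt_zero (u : ℤ) (π : List Trans1) : valAt u π 0 = u := by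
  simp [valAt, disp1]

lemma valAt_last {u : ℤ} {π : List Trans1} {t : ℕ} (h : π.length ≤ t) :
    valAt u π t = u + disp1 π := by
  rw [valAt, List.take_of_length_le h]

lemma valAt_succ_bounds {π : List Trans1}
    (hun : ∀ x ∈ π, x.2.1 = -1 ∨ x.2.1 = 0 ∨ x.2.1 = 1) (u : ℤ) (t : ℕ) :
    valAt u π t - 1 ≤ valAt u π (t+1) ∧ valAt u π (t+1) ≤ valAt u π t + 1 := by
  rcases lt_or_ge t π.length with h | h
  · have e : π.take (t+1) = π.take t ++ [π[t]] := by
      rw [List.take_succ, List.getElem?_eq_getElem h]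
      rfl
    have hx := hun π[t] (List.getElem_mem h)
    have hone : disp1 [π[t]] = π[t].2.1 := by simp [disp1]
    simp only [valAt, e, disp1_append]
    omega
  · rw [valAt_last h, valAt_last (Nat.le_succ_of_le h)]
    omega

lemma stAt_mem {Q : Finset ℕ} {T : Finset Trans1} {p : ℕ} {π : List Trans1}
    (hQ : ∀ t ∈ T, t.1 ∈ Q ∧ t.2.2 ∈ Q) (hT : ∀ t ∈ π, t ∈ T) (hp : p ∈ Q) (t : ℕ) :
    stAt p π t ∈ Q :=
  endSt_mem (fun x hx => (hQ x (hT x (List.take_subset _ _ hx))).2) hp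

/-- In a 1-VASS with unary updates, reachable configurations
are connected by a run of length at most `(|Q|+1)^c + |Q|·|v−u|`. -/
theorem statement9 :
    ∃ c : ℕ, ∀ (Q : Finset ℕ) (T : Finset Trans1),
      (∀ t ∈ T, t.1 ∈ Q ∧ t.2.2 ∈ Q) →
      (∀ t ∈ T, t.2.1 = -1 ∨ t.2.1 = 0 ∨ t.2.1 = 1) →
      ∀ p ∈ Q, ∀ q ∈ Q, ∀ u v : ℕ,
        Reach1 T NNeg p (u : ℤ) q (v : ℤ) →
        ∃ π, Run1 T NNeg p (u : ℤ) q (v : ℤ) π ∧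
          π.length ≤ (Q.card + 1) ^ c + Q.card * ((v : ℤ) - (u : ℤ)).natAbs := by
  classical
  refine ⟨4, ?_⟩
  intro Q T hQ hU p hp q hq u v hreach
  have hex : ∃ k, ∃ π, Run1 T NNeg p (u:ℤ) q (v:ℤ) π ∧ π.length = k := by
    obtain ⟨π, h⟩ := hreach
    exact ⟨π.length, π, h, rfl⟩
  obtain ⟨π, hπ, hπlen⟩ := Nat.find_spec hex
  have hmin : ∀ π', Run1 T NNeg p (u:ℤ) q (v:ℤ) π' → π.length ≤ π'.length := by
    intro π' h'
    rw [hπlen]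
    exact Nat.find_le ⟨π', h', rfl⟩
  refine ⟨π, hπ, ?_⟩
  have hrun := hπ
  obtain ⟨hT, hpath, hu0, hv0, hval0⟩ := hπ
  simp only [NNeg, Set.mem_setOf_eq] at hval0
  set D : ℕ := ((v:ℤ) - (u:ℤ)).natAbs with hDdef
  set L := π.length with hLdef
  set n := Q.card with hndef
  have hn1 : 1 ≤ n := Finset.card_pos.mpr ⟨p, hp⟩
  have hun : ∀ x ∈ π, x.2.1 = -1 ∨ x.2.1 = 0 ∨ x.2.1 = 1 := fun x hx => hU x (hT x hx)
  have hstep_up : ∀ t, valAt (u:ℤ) π (t+1) ≤ valAt (u:ℤ) π t + 1 :=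
    fun t => (valAt_succ_bounds hun _ t).2
  have hstep_dn : ∀ t, valAt (u:ℤ) π t - 1 ≤ valAt (u:ℤ) π (t+1) :=
    fun t => (valAt_succ_bounds hun _ t).1
  have hvL : ∀ t, L ≤ t → valAt (u:ℤ) π t = (v:ℤ) := by
    intro t ht
    rw [valAt_last ht]
    omega
  have hv00 : valAt (u:ℤ) π 0 = (u:ℤ) := valAt_zero _ _
  have hnn : ∀ t, 0 ≤ valAt (u:ℤ) π t := by
    intro t
    rcases Nat.eq_zero_or_pos t with rfl | ht
    · rw [hv00]; exact Int.ofNat_nonneg u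
    · rcases le_or_gt t L with h | h
      · exact hval0 t ht h
      · rw [hvL t h.le]; exact Int.ofNat_nonneg v
  have hsQ : ∀ t, stAt p π t ∈ Q := stAt_mem hQ hT hp
  have keyF : ∀ i1 i2 j2 j1 : ℕ, i1 ≤ i2 → i2 ≤ j2 → j2 ≤ j1 → j1 ≤ L →
      (i1 < i2 ∨ j2 < j1) → stAt p π i1 = stAt p π i2 → stAt p π j2 = stAt p π j1 →
      (valAt (u:ℤ) π i2 - valAt (u:ℤ) π i1) + (valAt (u:ℤ) π j1 - valAt (u:ℤ) π j2) = 0 →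
      (∀ t, i2 ≤ t → t ≤ j2 → valAt (u:ℤ) π i2 - valAt (u:ℤ) π i1 ≤ valAt (u:ℤ) π t) →
      False := by
    intro i1 i2 j2 j1 a1 a2 a3 a4 a5 a6 a7 a8 a9
    obtain ⟨π', hπ', hlen'⟩ := key' hrun a1 a2 a3 a4 a6 a7 a8 a9
    have := hmin π' hπ'
    omega
  set M : ℤ := max (u:ℤ) (v:ℤ) with hMdef
  set W : ℤ := min (u:ℤ) (v:ℤ) with hWdef
  set K : ℤ := ((n^2 : ℕ) : ℤ) with hKdef
  have huM : (u:ℤ) ≤ M := le_max_left _ _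
  have hvM : (v:ℤ) ≤ M := le_max_right _ _
  have hWu : W ≤ (u:ℤ) := min_le_left _ _
  have hWv : W ≤ (v:ℤ) := min_le_right _ _
  have hM0 : 0 ≤ M := le_trans (Int.ofNat_nonneg u) huM
  have hW0 : 0 ≤ W := le_min (Int.ofNat_nonneg u) (Int.ofNat_nonneg v)
  have hK0 : 0 ≤ K := by rw [hKdef]; exact Int.ofNat_nonneg _
  -- ===================== HILL BOUND =====================
  have hill : ∀ t, valAt (u:ℤ) π t ≤ M + K := by
    by_contra hcon
    push_neg at hcon
    obtain ⟨t0, ht0⟩ := hcon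
    obtain ⟨P, hPmem, hPmax⟩ := Finset.exists_max_image (Finset.range (L+1))
      (fun t => valAt (u:ℤ) π t) ⟨0, by simp⟩
    have hPL : P ≤ L := by
      have := Finset.mem_range.mp hPmem
      omega
    have hPall : ∀ t, valAt (u:ℤ) π t ≤ valAt (u:ℤ) π P := by
      intro t
      rcases le_or_gt t L with h | h
      · exact hPmax t (Finset.mem_range.mpr (by omega))
      · rw [hvL t h.le]
        have h2 := hPmax L (Finset.mem_range.mpr (by omega))
        rw [hvL L le_rfl] at h2
        exact h2
    have hPbig : M + K < valAt (u:ℤ) π P := lt_of_lt_of_le ht0 (hPall t0)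
    set up : ℤ → ℕ := fun ℓ => Nat.findGreatest (fun t => valAt (u:ℤ) π t = ℓ) P with hupdef
    set dn : ℤ → ℕ := fun ℓ =>
      if h : ∃ t, P ≤ t ∧ t ≤ L ∧ valAt (u:ℤ) π t = ℓ then Nat.find h else 0 with hdndef
    have hgood : ∀ ℓ : ℤ, M + 1 ≤ ℓ → ℓ ≤ M + K + 1 →
        (valAt (u:ℤ) π (up ℓ) = ℓ ∧ up ℓ ≤ P ∧
          (∀ t, t ≤ P → valAt (u:ℤ) π t = ℓ → t ≤ up ℓ))
        ∧ (valAt (u:ℤ) π (dn ℓ) = ℓ ∧ P ≤ dn ℓ ∧ dn ℓ ≤ L ∧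
            (∀ t, P ≤ t → valAt (u:ℤ) π t = ℓ → dn ℓ ≤ t)) := by
      intro ℓ hl1 hl2
      have hlP : ℓ ≤ valAt (u:ℤ) π P := by omega
      obtain ⟨t, ht1, ht2, ht3⟩ := ivt_up (valAt (u:ℤ) π) hstep_up (Nat.zero_le P)
        (y := ℓ) (by rw [hv00]; omega) hlP
      have hup1 : valAt (u:ℤ) π (up ℓ) = ℓ := by
        simp only [hupdef]
        exact Nat.findGreatest_spec (P := fun t => valAt (u:ℤ) π t = ℓ) ht2 ht3
      have hup2 : up ℓ ≤ P := by
        simp only [hupdef]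
        exact Nat.findGreatest_le P
      have hup3 : ∀ t', t' ≤ P → valAt (u:ℤ) π t' = ℓ → t' ≤ up ℓ := by
        intro t' a b
        simp only [hupdef]
        exact Nat.le_findGreatest a b
      have d_ex : ∃ t', P ≤ t' ∧ t' ≤ L ∧ valAt (u:ℤ) π t' = ℓ := by
        obtain ⟨t', a, b, c⟩ := ivt_down (valAt (u:ℤ) π) hstep_dn hPL (y := ℓ)
          (by rw [hvL L le_rfl]; omega) hlP
        exact ⟨t', a, b, c⟩
      have hdn1 : valAt (u:ℤ) π (dn ℓ) = ℓ ∧ P ≤ dn ℓ ∧ dn ℓ ≤ L := by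
        simp only [hdndef, dif_pos d_ex]
        have := Nat.find_spec d_ex
        tauto
      have hdn4 : ∀ t', P ≤ t' → valAt (u:ℤ) π t' = ℓ → dn ℓ ≤ t' := by
        intro t' a b
        rcases le_or_gt t' L with h | h
        · simp only [hdndef, dif_pos d_ex]
          exact Nat.find_min' d_ex ⟨a, h, b⟩
        · exfalso
          rw [hvL t' h.le] at b
          omega
      exact ⟨⟨hup1, hup2, hup3⟩, hdn1.1, hdn1.2.1, hdn1.2.2, hdn4⟩
    have hup_ge : ∀ ℓ : ℤ, M + 1 ≤ ℓ → ℓ ≤ M + K + 1 →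
        ∀ t, up ℓ ≤ t → t ≤ P → ℓ ≤ valAt (u:ℤ) π t := by
      intro ℓ a b t hc hd
      by_contra hlt
      push_neg at hlt
      obtain ⟨hu1, hu2, hu3⟩ := (hgood ℓ a b).1
      obtain ⟨t', e1, e2, e3⟩ := ivt_up (valAt (u:ℤ) π) hstep_up hd (y := ℓ) hlt.le (by omega)
      have h5 := hu3 t' e2 e3
      have h6 : t' = t := by omega
      rw [h6] at e3
      omega
    have hdn_ge : ∀ ℓ : ℤ, M + 1 ≤ ℓ → ℓ ≤ M + K + 1 →
        ∀ t, P ≤ t → t ≤ dn ℓ → ℓ ≤ valAt (u:ℤ) π t := by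
      intro ℓ a b t hc hd
      by_contra hlt
      push_neg at hlt
      obtain ⟨hd1, hd2, hd3, hd4⟩ := (hgood ℓ a b).2
      obtain ⟨t', e1, e2, e3⟩ := ivt_down (valAt (u:ℤ) π) hstep_dn hc (y := ℓ) hlt.le (by omega)
      have h5 := hd4 t' e1 e3
      have h6 : t' = t := by omega
      rw [h6] at e3
      omega
    have hpig : ∃ ℓ1 ∈ Finset.Icc (M+1) (M+K+1), ∃ ℓ2 ∈ Finset.Icc (M+1) (M+K+1),
        ℓ1 ≠ ℓ2 ∧ (fun ℓ => (stAt p π (up ℓ), stAt p π (dn ℓ))) ℓ1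
          = (fun ℓ => (stAt p π (up ℓ), stAt p π (dn ℓ))) ℓ2 := by
      apply Finset.exists_ne_map_eq_of_card_lt_of_maps_to (t := Q ×ˢ Q)
      · rw [Int.card_Icc, Finset.card_product]
        have e : (M + K + 1 + 1 - (M+1)).toNat = n^2 + 1 := by omega
        rw [e]
        exact Nat.lt_succ_of_le (pow_two n).ge
      · intro ℓ _
        exact Finset.mk_mem_product (hsQ _) (hsQ _)
    obtain ⟨ℓ1, hℓ1, ℓ2, hℓ2, hne, heq⟩ := hpig
    simp only [Finset.mem_Icc] at hℓ1 hℓ2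
    simp only [Prod.mk.injEq] at heq
    obtain ⟨hequp, heqdn⟩ := heq
    have main : ∀ a b : ℤ, M+1 ≤ a → a ≤ M+K+1 → M+1 ≤ b → b ≤ M+K+1 → a < b →
        stAt p π (up a) = stAt p π (up b) → stAt p π (dn a) = stAt p π (dn b) → False := by
      intro a b a1 a2 b1 b2 hab hs1 hs2
      obtain ⟨⟨ua1, ua2, ua3⟩, da1, da2, da3, da4⟩ := hgood a a1 a2
      obtain ⟨⟨ub1, ub2, ub3⟩, db1, db2, db3, db4⟩ := hgood b b1 b2
      have hupab : up a < up b := by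
        rcases le_or_gt (up b) (up a) with h | h
        · have := hup_ge b b1 b2 (up a) h ua2
          omega
        · exact h
      have hdnab : dn b < dn a := by
        rcases le_or_gt (dn a) (dn b) with h | h
        · have := hdn_ge b b1 b2 (dn a) da2 h
          omega
        · exact h
      apply keyF (up a) (up b) (dn b) (dn a) hupab.le (ub2.trans db2) hdnab.le da3
        (Or.inl hupab) hs1 hs2.symm
      · rw [ua1, ub1, da1, db1]
        ring
      · intro t c d
        have hbt : b ≤ valAt (u:ℤ) π t := by
          rcases le_total t P with h | h
          · exact hup_ge b b1 b2 t c h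
          · exact hdn_ge b b1 b2 t h d
        rw [ua1, ub1]
        omega
    rcases hne.lt_or_gt with h | h
    · exact main ℓ1 ℓ2 hℓ1.1 hℓ1.2 hℓ2.1 hℓ2.2 h hequp heqdn
    · exact main ℓ2 ℓ1 hℓ2.1 hℓ2.2 hℓ1.1 hℓ1.2 h hequp.symm heqdn.symm
  -- ===================== VALLEY BOUND =====================
  have valley : ∀ t, W - K ≤ valAt (u:ℤ) π t := by
    by_contra hcon
    push_neg at hcon
    obtain ⟨t0, ht0⟩ := hcon
    obtain ⟨B, hBmem, hBmin⟩ := Finset.exists_min_image (Finset.range (L+1))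
      (fun t => valAt (u:ℤ) π t) ⟨0, by simp⟩
    have hBL : B ≤ L := by
      have := Finset.mem_range.mp hBmem
      omega
    have hBall : ∀ t, valAt (u:ℤ) π B ≤ valAt (u:ℤ) π t := by
      intro t
      rcases le_or_gt t L with h | h
      · exact hBmin t (Finset.mem_range.mpr (by omega))
      · rw [hvL t h.le]
        have h2 := hBmin L (Finset.mem_range.mpr (by omega))
        rw [hvL L le_rfl] at h2
        exact h2
    have hBsmall : valAt (u:ℤ) π B < W - K := lt_of_le_of_lt (hBall t0) ht0
    set dnv : ℤ → ℕ := fun ℓ => Nat.findGreatest (fun t => valAt (u:ℤ) π t = ℓ) B with hdnvdef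
    set upv : ℤ → ℕ := fun ℓ =>
      if h : ∃ t, B ≤ t ∧ t ≤ L ∧ valAt (u:ℤ) π t = ℓ then Nat.find h else 0 with hupvdef
    have hgood : ∀ ℓ : ℤ, W - K - 1 ≤ ℓ → ℓ ≤ W - 1 →
        (valAt (u:ℤ) π (dnv ℓ) = ℓ ∧ dnv ℓ ≤ B ∧
          (∀ t, t ≤ B → valAt (u:ℤ) π t = ℓ → t ≤ dnv ℓ))
        ∧ (valAt (u:ℤ) π (upv ℓ) = ℓ ∧ B ≤ upv ℓ ∧ upv ℓ ≤ L ∧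
            (∀ t, B ≤ t → valAt (u:ℤ) π t = ℓ → upv ℓ ≤ t)) := by
      intro ℓ hl1 hl2
      have hlB : valAt (u:ℤ) π B ≤ ℓ := by omega
      obtain ⟨t, ht1, ht2, ht3⟩ := ivt_down (valAt (u:ℤ) π) hstep_dn (Nat.zero_le B)
        (y := ℓ) hlB (by rw [hv00]; omega)
      have hd1 : valAt (u:ℤ) π (dnv ℓ) = ℓ := by
        simp only [hdnvdef]
        exact Nat.findGreatest_spec (P := fun t => valAt (u:ℤ) π t = ℓ) ht2 ht3
      have hd2 : dnv ℓ ≤ B := by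
        simp only [hdnvdef]
        exact Nat.findGreatest_le B
      have hd3 : ∀ t', t' ≤ B → valAt (u:ℤ) π t' = ℓ → t' ≤ dnv ℓ := by
        intro t' a b
        simp only [hdnvdef]
        exact Nat.le_findGreatest a b
      have u_ex : ∃ t', B ≤ t' ∧ t' ≤ L ∧ valAt (u:ℤ) π t' = ℓ := by
        obtain ⟨t', a, b, c⟩ := ivt_up (valAt (u:ℤ) π) hstep_up hBL (y := ℓ)
          hlB (by rw [hvL L le_rfl]; omega)
        exact ⟨t', a, b, c⟩
      have hu1 : valAt (u:ℤ) π (upv ℓ) = ℓ ∧ B ≤ upv ℓ ∧ upv ℓ ≤ L := by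
        simp only [hupvdef, dif_pos u_ex]
        have := Nat.find_spec u_ex
        tauto
      have hu4 : ∀ t', B ≤ t' → valAt (u:ℤ) π t' = ℓ → upv ℓ ≤ t' := by
        intro t' a b
        rcases le_or_gt t' L with h | h
        · simp only [hupvdef, dif_pos u_ex]
          exact Nat.find_min' u_ex ⟨a, h, b⟩
        · exfalso
          rw [hvL t' h.le] at b
          omega
      exact ⟨⟨hd1, hd2, hd3⟩, hu1.1, hu1.2.1, hu1.2.2, hu4⟩
    have hdnv_le : ∀ ℓ : ℤ, W - K - 1 ≤ ℓ → ℓ ≤ W - 1 →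
        ∀ t, dnv ℓ ≤ t → t ≤ B → valAt (u:ℤ) π t ≤ ℓ := by
      intro ℓ a b t hc hd
      by_contra hlt
      push_neg at hlt
      obtain ⟨hd1, hd2, hd3⟩ := (hgood ℓ a b).1
      obtain ⟨t', e1, e2, e3⟩ := ivt_down (valAt (u:ℤ) π) hstep_dn hd (y := ℓ) (by omega) hlt.le
      have h5 := hd3 t' e2 e3
      have h6 : t' = t := by omega
      rw [h6] at e3
      omega
    have hupv_le : ∀ ℓ : ℤ, W - K - 1 ≤ ℓ → ℓ ≤ W - 1 →
        ∀ t, B ≤ t → t ≤ upv ℓ → valAt (u:ℤ) π t ≤ ℓ := by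
      intro ℓ a b t hc hd
      by_contra hlt
      push_neg at hlt
      obtain ⟨hu1, hu2, hu3, hu4⟩ := (hgood ℓ a b).2
      obtain ⟨t', e1, e2, e3⟩ := ivt_up (valAt (u:ℤ) π) hstep_up hc (y := ℓ) (by omega) hlt.le
      have h5 := hu4 t' e1 e3
      have h6 : t' = t := by omega
      rw [h6] at e3
      omega
    have hpig : ∃ ℓ1 ∈ Finset.Icc (W-K-1) (W-1), ∃ ℓ2 ∈ Finset.Icc (W-K-1) (W-1),
        ℓ1 ≠ ℓ2 ∧ (fun ℓ => (stAt p π (dnv ℓ), stAt p π (upv ℓ))) ℓ1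
          = (fun ℓ => (stAt p π (dnv ℓ), stAt p π (upv ℓ))) ℓ2 := by
      apply Finset.exists_ne_map_eq_of_card_lt_of_maps_to (t := Q ×ˢ Q)
      · rw [Int.card_Icc, Finset.card_product]
        have e : (W - 1 + 1 - (W - K - 1)).toNat = n^2 + 1 := by omega
        rw [e]
        exact Nat.lt_succ_of_le (pow_two n).ge
      · intro ℓ _
        exact Finset.mk_mem_product (hsQ _) (hsQ _)
    obtain ⟨ℓ1, hℓ1, ℓ2, hℓ2, hne, heq⟩ := hpig
    simp only [Finset.mem_Icc] at hℓ1 hℓ2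
    simp only [Prod.mk.injEq] at heq
    obtain ⟨heqd, hequ⟩ := heq
    have main : ∀ a b : ℤ, W-K-1 ≤ a → a ≤ W-1 → W-K-1 ≤ b → b ≤ W-1 → a < b →
        stAt p π (dnv a) = stAt p π (dnv b) → stAt p π (upv a) = stAt p π (upv b) → False := by
      intro a b a1 a2 b1 b2 hab hs1 hs2
      obtain ⟨⟨da1, da2, da3⟩, ua1, ua2, ua3, ua4⟩ := hgood a a1 a2
      obtain ⟨⟨db1, db2, db3⟩, ub1, ub2, ub3, ub4⟩ := hgood b b1 b2
      have hdnab : dnv b < dnv a := by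
        rcases le_or_gt (dnv a) (dnv b) with h | h
        · have := hdnv_le a a1 a2 (dnv b) h db2
          omega
        · exact h
      have hupab : upv a < upv b := by
        rcases le_or_gt (upv b) (upv a) with h | h
        · have := hupv_le a a1 a2 (upv b) ub2 h
          omega
        · exact h
      apply keyF (dnv b) (dnv a) (upv a) (upv b) hdnab.le (da2.trans ua2) hupab.le ub3
        (Or.inl hdnab) hs1.symm hs2
      · rw [da1, db1, ua1, ub1]
        ring
      · intro t c d
        have := hnn t
        rw [da1, db1]
        omega
    rcases hne.lt_or_gt with h | h
    · exact main ℓ1 ℓ2 hℓ1.1 hℓ1.2 hℓ2.1 hℓ2.2 h heqd hequ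
    · exact main ℓ2 ℓ1 hℓ2.1 hℓ2.2 hℓ1.1 hℓ1.2 h heqd.symm hequ.symm
  -- ===================== COUNTING =====================
  have hinj : Set.InjOn (fun t => (stAt p π t, valAt (u:ℤ) π t)) (Finset.range (L+1)) := by
    intro a ha b hb hab
    simp only [Prod.mk.injEq] at hab
    by_contra hne
    have habs : ∀ a b : ℕ, a < b → b ≤ L → stAt p π a = stAt p π b →
        valAt (u:ℤ) π a = valAt (u:ℤ) π b → False := by
      intro a b h1 h2 h3 h4
      apply keyF a b L L h1.le h2 le_rfl le_rfl (Or.inl h1) h3 rfl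
      · rw [h4]; ring
      · intro t c d
        have := hnn t
        omega
    simp only [Finset.coe_range, Set.mem_Iio] at ha hb
    rcases Nat.lt_trichotomy a b with h | h | h
    · exact habs a b h (by omega) hab.1 hab.2
    · exact hne h
    · exact habs b a h (by omega) hab.1.symm hab.2.symm
  have hmaps : ∀ t ∈ Finset.range (L+1),
      (stAt p π t, valAt (u:ℤ) π t) ∈ Q ×ˢ Finset.Icc (max 0 (W-K)) (M+K) := by
    intro t _
    refine Finset.mk_mem_product (hsQ _) ?_
    rw [Finset.mem_Icc]
    constructor
    · have h1 := hnn t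
      have h2 := valley t
      rcases le_total 0 (W - K) with h | h
      · rw [max_eq_right h]; exact h2
      · rw [max_eq_left h]; exact h1
    · exact hill t
  have hcard := Finset.card_le_card_of_injOn _ hmaps hinj
  rw [Finset.card_range, Finset.card_product, Int.card_Icc] at hcard
  have hD : (D:ℤ) = M - W := by
    rcases le_total (u:ℤ) (v:ℤ) with h | h
    · rw [hDdef, hMdef, hWdef, max_eq_right h, min_eq_left h]
      omega
    · rw [hDdef, hMdef, hWdef, max_eq_left h, min_eq_right h]
      omega
  have hRbound : (M + K + 1 - max 0 (W-K)).toNat ≤ D + 2*n^2 + 1 := by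
    rcases le_total 0 (W - K) with h | h
    · rw [max_eq_right h]
      omega
    · rw [max_eq_left h]
      omega
  have hfinal : L + 1 ≤ n * (D + 2*n^2 + 1) :=
    le_trans hcard (Nat.mul_le_mul_left n hRbound)
  have harith : 2*n^3 + n ≤ (n+1)^4 + 1 := by
    have h1 : n ≤ n^3 := Nat.le_self_pow (by norm_num) n
    have h2 : (n+1)^4 = n^4+4*n^3+6*n^2+4*n+1 := by ring
    rw [h2]
    linarith [Nat.zero_le (n^4), Nat.zero_le (n^2)]
  have hexp : n * (D + 2*n^2 + 1) = n*D + (2*n^3 + n) := by ring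
  rw [hexp] at hfinal
  have h2 : L + 1 ≤ (n*D + (n+1)^4) + 1 := by
    calc L + 1 ≤ n*D + (2*n^3+n) := hfinal
      _ ≤ n*D + ((n+1)^4+1) := Nat.add_le_add_left harith _
      _ = (n*D + (n+1)^4) + 1 := by ring
  have hle : L ≤ n * D + (n+1)^4 := Nat.le_of_succ_le_succ h2
  rw [Nat.add_comm] at hle
  exact hle

end VASS
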